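/- Let G=(V,E) be an undirected polymatroidal network with a fractional cut solution ℓ, ℓ(e,u), ℓ(e,v), let k ≥ 2 be such that log₂ k is a positive integer multiple of 3, and let 0 < δ < 1 with ℓ(e) < δ/(2·log₂ k) for every edge e. Then for every node s there exists r ∈ [0,δ) such that ν(δ(B(s,r))) ≤ 28·(log₂ k)·(1/δ)·(vol(B(s,r)) + vol(V)/k), where B(s,r) = {u ∈ V : dist_ℓ(s,u) ≤ r} and vol(X) = Σ_{v∈X} ρ̂_v(d_v). -/

import Mathlib

open Finset MeasureTheory
open scoped ENNReal Classical

/-- `UWalk ep1 ep2 s t p`: in the undirected graph whose edge `e` has endpoints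
`ep1 e` and `ep2 e`, the list of edges `p` forms a walk from `s` to `t`. -/
def UWalk {V E : Type} [DecidableEq V] (ep1 ep2 : E → V) : V → V → List E → Prop
  | s, t, [] => s = t
  | s, t, e :: p => (ep1 e = s ∨ ep2 e = s) ∧
      UWalk ep1 ep2 (if ep1 e = s then ep2 e else ep1 e) t p

/-- The list of vertices visited by an undirected walk starting at `s`. -/
def uwalkVerts {V E : Type} [DecidableEq V] (ep1 ep2 : E → V) : V → List E → List V
  | s, [] => [s]
  | s, e :: p => s :: uwalkVerts ep1 ep2 (if ep1 e = s then ep2 e else ep1 e) p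

/-- A simple undirected path from `s` to `t`. -/
def UIsPath {V E : Type} [DecidableEq V] (ep1 ep2 : E → V) (s t : V) (p : List E) : Prop :=
  UWalk ep1 ep2 s t p ∧ (uwalkVerts ep1 ep2 s p).Nodup

/-- `F` separates `s` and `t`: they lie in different connected components of `G∖F`. -/
def USep {V E : Type} [DecidableEq V] (ep1 ep2 : E → V) (F : Finset E) (s t : V) : Prop :=
  ¬ ∃ p : List E, UWalk ep1 ep2 s t p ∧ ∀ e ∈ p, e ∉ F

/-- `δ(S)`: the set of edges with exactly one endpoint in `S`. -/
def uvcut {V E : Type} [Fintype E] [DecidableEq V] (ep1 ep2 : E → V) (S : Finset V) :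
    Finset E :=
  Finset.univ.filter (fun e => (ep1 e ∈ S ∧ ep2 e ∉ S) ∨ (ep1 e ∉ S ∧ ep2 e ∈ S))

/-- Shortest-path distance (in `ℝ≥0∞`, `⊤` when unreachable) under edge lengths `len`. -/
noncomputable def udist {V E : Type} [DecidableEq V] (ep1 ep2 : E → V) (len : E → ℝ)
    (u v : V) : ℝ≥0∞ :=
  ⨅ p : { p : List E // UWalk ep1 ep2 u v p }, ENNReal.ofReal ((p.1.map len).sum)

/-- The Lovász extension of `ρ` on the ground set `ground`,
`ρ̂(x) = ∫_0^∞ ρ({e ∈ ground : x e ≥ θ}) dθ` (which agrees with `∫_0^1` when `x ≤ 1`). -/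
noncomputable def lovaszExt {E : Type} [Fintype E] (ρ : Finset E → ℝ)
    (ground : Finset E) (x : E → ℝ) : ℝ :=
  ∫ θ in Set.Ioi (0:ℝ), ρ (ground.filter (fun e => θ ≤ x e))

/-- An undirected polymatroidal network: a finite undirected graph together with,
for each node `v`, a polymatroid `rho v` on the set of edges incident to `v`. -/
structure UPolyNet (V E : Type) [Fintype V] [Fintype E] [DecidableEq V] [DecidableEq E] where
  ep1 : E → V
  ep2 : E → V
  rho : V → Finset E → ℝ
  rho_empty : ∀ v, rho v ∅ = 0
  rho_nonneg : ∀ v A, A ⊆ Finset.univ.filter (fun e => ep1 e = v ∨ ep2 e = v) → 0 ≤ rho v A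
  rho_mono : ∀ v A B, A ⊆ B → B ⊆ Finset.univ.filter (fun e => ep1 e = v ∨ ep2 e = v) →
    rho v A ≤ rho v B
  rho_submod : ∀ v A B, A ⊆ Finset.univ.filter (fun e => ep1 e = v ∨ ep2 e = v) →
    B ⊆ Finset.univ.filter (fun e => ep1 e = v ∨ ep2 e = v) →
    rho v (A ∪ B) + rho v (A ∩ B) ≤ rho v A + rho v B

namespace UPolyNet

variable {V E : Type} [Fintype V] [Fintype E] [DecidableEq V] [DecidableEq E]

/-- The set `δ(v)` of edges incident to `v` (the ground set of `rho v`). -/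
def incE (N : UPolyNet V E) (v : V) : Finset E :=
  Finset.univ.filter (fun e => N.ep1 e = v ∨ N.ep2 e = v)

/-- The cost `ν(F)` of the edge cut `F`: the minimum over valid assignments `g` of
the edges of `F` to their endpoints of `Σ_v ρ_v(g⁻¹(v))`. -/
noncomputable def cutCost (N : UPolyNet V E) (F : Finset E) : ℝ :=
  sInf { c : ℝ | ∃ g : E → V, (∀ e ∈ F, g e = N.ep1 e ∨ g e = N.ep2 e) ∧
    c = ∑ v : V, N.rho v ((N.incE v ∩ F).filter (fun e => g e = v)) }

/-- Total flow on an edge `e`. -/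
noncomputable def edgeFlow (N : UPolyNet V E) {ι : Type} [Fintype ι]
    (f : ι → List E → ℝ) (e : E) : ℝ :=
  ∑ i : ι, ∑ᶠ p ∈ {p : List E | e ∈ p}, f i p

/-- The rate of commodity `i`. -/
noncomputable def rate {ι : Type} (f : ι → List E → ℝ) (i : ι) : ℝ :=
  ∑ᶠ p : List E, f i p

/-- A feasible multicommodity flow for the source-sink pairs `(s i, t i)`. -/
structure IsFlow (N : UPolyNet V E) {ι : Type} [Fintype ι] (s t : ι → V)
    (f : ι → List E → ℝ) : Prop where
  nonneg : ∀ i p, 0 ≤ f i p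
  supp : ∀ i p, f i p ≠ 0 → UIsPath N.ep1 N.ep2 (s i) (t i) p
  fin : ∀ i, (Function.support (f i)).Finite
  cap : ∀ v, ∀ S ⊆ N.incE v, ∑ e ∈ S, N.edgeFlow f e ≤ N.rho v S

/-- `D(F)`: the total demand of the pairs separated by `F`. -/
noncomputable def sepDemand (N : UPolyNet V E) {ι : Type} [Fintype ι]
    (s t : ι → V) (D : ι → ℝ) (F : Finset E) : ℝ :=
  ∑ i : ι, if USep N.ep1 N.ep2 F (s i) (t i) then D i else 0

/-- The value of the maximum throughput multicommodity flow. -/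
noncomputable def maxThroughput (N : UPolyNet V E) {ι : Type} [Fintype ι]
    (s t : ι → V) : ℝ :=
  sSup { r : ℝ | ∃ f : ι → List E → ℝ, N.IsFlow s t f ∧ r = ∑ i : ι, rate f i }

/-- The value of the maximum concurrent multicommodity flow for demands `D`. -/
noncomputable def maxConcurrent (N : UPolyNet V E) {ι : Type} [Fintype ι]
    (s t : ι → V) (D : ι → ℝ) : ℝ :=
  sSup { lam : ℝ | ∃ f : ι → List E → ℝ, N.IsFlow s t f ∧ ∀ i, rate f i = lam * D i }

/-- The vector `d_v`: for an edge `e` incident to `v`, its portion `ℓ(e,v)`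
assigned to `v` by the fractional cut solution with portions `c1` (at `ep1`)
and `c2` (at `ep2`). -/
def dvec (N : UPolyNet V E) (c1 c2 : E → ℝ) (v : V) : E → ℝ :=
  fun e => if N.ep1 e = v then c1 e else c2 e

/-- `ρ̂_v(d_v)`, the contribution of the node `v` to the fractional cut cost. -/
noncomputable def nodeVol (N : UPolyNet V E) (c1 c2 : E → ℝ) (v : V) : ℝ :=
  lovaszExt (N.rho v) (N.incE v) (N.dvec c1 c2 v)

/-- `vol(X) = Σ_{v ∈ X} ρ̂_v(d_v)`. -/
noncomputable def vol (N : UPolyNet V E) (c1 c2 : E → ℝ) (X : Finset V) : ℝ :=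
  ∑ v ∈ X, N.nodeVol c1 c2 v

end UPolyNet

open UPolyNet
section Aux
variable {V E : Type} [DecidableEq V]

lemma uwalk_append (ep1 ep2 : E → V) {s u : V} {p : List E} (hp : UWalk ep1 ep2 s u p)
    (e : E) (he : ep1 e = u ∨ ep2 e = u) :
    UWalk ep1 ep2 s (if ep1 e = u then ep2 e else ep1 e) (p ++ [e]) := by
  induction p generalizing s with
  | nil =>
    cases hp
    exact ⟨he, rfl⟩
  | cons f q ih =>
    obtain ⟨h1, h2⟩ := hp
    exact ⟨h1, ih h2⟩

lemma udist_triangle (ep1 ep2 : E → V) (len : E → ℝ) (s u : V) (e : E)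
    (he : ep1 e = u ∨ ep2 e = u) :
    udist ep1 ep2 len s (if ep1 e = u then ep2 e else ep1 e) ≤
      udist ep1 ep2 len s u + ENNReal.ofReal (len e) := by
  have hrw : udist ep1 ep2 len s u + ENNReal.ofReal (len e) =
      ⨅ p : { p : List E // UWalk ep1 ep2 s u p },
        (ENNReal.ofReal ((p.1.map len).sum) + ENNReal.ofReal (len e)) := ENNReal.iInf_add
  rw [hrw]
  refine le_iInf fun ⟨p, hp⟩ => ?_
  rw [udist]
  refine (iInf_le _ ⟨p ++ [e], uwalk_append ep1 ep2 hp e he⟩).trans ?_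
  simp only [List.map_append, List.sum_append, List.map_cons, List.map_nil, List.sum_cons,
    List.sum_nil, add_zero]
  exact ENNReal.ofReal_add_le

end Aux
section Meas
variable {E : Type} [Fintype E] [DecidableEq E]

lemma measurableSet_filter_eq (g : Finset E) (p : E → ℝ → Prop)
    [∀ r, DecidablePred (fun e => p e r)]
    (hp : ∀ e, MeasurableSet {r | p e r}) (A : Finset E) :
    MeasurableSet {r : ℝ | g.filter (fun e => p e r) = A} := by
  have : {r : ℝ | g.filter (fun e => p e r) = A} =
      ⋂ e : E, {r : ℝ | (e ∈ g ∧ p e r) ↔ e ∈ A} := by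
    ext r
    simp only [Set.mem_setOf_eq, Set.mem_iInter, Finset.ext_iff, Finset.mem_filter]
  rw [this]
  refine MeasurableSet.iInter fun e => ?_
  by_cases hg : e ∈ g <;> by_cases ha : e ∈ A <;> simp only [hg, ha, true_and, iff_true,
    iff_false, not_and, true_implies, false_and, false_iff, not_false_iff]
  · exact hp e
  · exact (hp e).compl
  · simpa using (MeasurableSet.univ : MeasurableSet (Set.univ : Set ℝ))
  · simpa using (MeasurableSet.univ : MeasurableSet (Set.univ : Set ℝ))

lemma measurable_F_filter (F : Finset E → ℝ) (g : Finset E) (p : E → ℝ → Prop)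
    [∀ r, DecidablePred (fun e => p e r)]
    (hp : ∀ e, MeasurableSet {r | p e r}) :
    Measurable (fun r : ℝ => F (g.filter (fun e => p e r))) := by
  have hrep : (fun r : ℝ => F (g.filter (fun e => p e r))) =
      fun r => ∑ A : Finset E, if g.filter (fun e => p e r) = A then F A else 0 := by
    funext r
    rw [Finset.sum_ite_eq (Finset.univ) (g.filter (fun e => p e r)) F]
    simp
  rw [hrep]
  refine Finset.measurable_sum _ fun A _ => ?_
  exact Measurable.ite (measurableSet_filter_eq g p hp A) measurable_const measurable_const

lemma abs_F_le (F : Finset E → ℝ) (A : Finset E) :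
    |F A| ≤ ∑ B : Finset E, |F B| :=
  Finset.single_le_sum (fun B _ => abs_nonneg (F B)) (Finset.mem_univ A)

lemma integrableOn_of_bdd {f : ℝ → ℝ} (hm : Measurable f) {B : ℝ} (hb : ∀ x, |f x| ≤ B)
    {s : Set ℝ} (hfin : MeasureTheory.volume s < ⊤) :
    MeasureTheory.IntegrableOn f s MeasureTheory.volume := by
  haveI : MeasureTheory.IsFiniteMeasure (MeasureTheory.volume.restrict s) :=
    ⟨by rwa [MeasureTheory.Measure.restrict_apply_univ]⟩
  refine (MeasureTheory.integrable_const B).mono' hm.aestronglyMeasurable ?_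
  exact MeasureTheory.ae_of_all _ fun x => by simpa [Real.norm_eq_abs] using hb x

lemma integrableOn_G (F : Finset E → ℝ) (hF0 : F ∅ = 0) (g : Finset E) (x : E → ℝ) :
    MeasureTheory.IntegrableOn (fun θ : ℝ => F (g.filter (fun e => θ ≤ x e)))
      (Set.Ioi (0:ℝ)) MeasureTheory.volume := by
  set M : ℝ := ∑ e : E, |x e| with hM
  have hM0 : 0 ≤ M := Finset.sum_nonneg fun e _ => abs_nonneg _
  have hmeas : Measurable (fun θ : ℝ => F (g.filter (fun e => θ ≤ x e))) :=
    measurable_F_filter F g (fun e θ => θ ≤ x e) (fun e => measurableSet_Iic)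
  have hIoc : MeasureTheory.IntegrableOn (fun θ : ℝ => F (g.filter (fun e => θ ≤ x e)))
      (Set.Ioc (0:ℝ) M) MeasureTheory.volume :=
    integrableOn_of_bdd hmeas (fun θ => abs_F_le F _) (by simp [Real.volume_Ioc])
  have hzero : ∀ θ ∈ Set.Ioi M, F (g.filter (fun e => θ ≤ x e)) = 0 := by
    intro θ hθ
    have : g.filter (fun e => θ ≤ x e) = ∅ := by
      refine Finset.filter_eq_empty_iff.2 fun e _ => ?_
      have hxe : x e ≤ M := le_trans (le_abs_self _)
        (Finset.single_le_sum (fun b _ => abs_nonneg (x b)) (Finset.mem_univ e))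
      exact not_le.2 (lt_of_le_of_lt hxe hθ)
    rw [this, hF0]
  have hIoi : MeasureTheory.IntegrableOn (fun θ : ℝ => F (g.filter (fun e => θ ≤ x e)))
      (Set.Ioi M) MeasureTheory.volume := by
    refine MeasureTheory.integrableOn_zero.congr_fun ?_ measurableSet_Ioi
    exact fun θ hθ => (hzero θ hθ).symm
  have := hIoc.union hIoi
  rwa [Set.Ioc_union_Ioi_eq_Ioi hM0] at this

end Meas
section Key
open MeasureTheory
variable {E : Type} [Fintype E] [DecidableEq E]

lemma key_in (F : Finset E → ℝ) (g : Finset E) (x : E → ℝ) (t a b : ℝ)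
    (h0a : 0 ≤ a) (ht : 0 ≤ t) (hx : ∀ e, 0 ≤ x e) (hF0 : F ∅ = 0)
    (hnn : ∀ A, A ⊆ g → 0 ≤ F A)
    (hmono : ∀ A B, A ⊆ B → B ⊆ g → F A ≤ F B) :
    ∫ r in Set.Ioc a b, F (g.filter (fun e => ENNReal.ofReal t ≤ ENNReal.ofReal r ∧
        ENNReal.ofReal r < ENNReal.ofReal t + ENNReal.ofReal (x e))) ≤
      ∫ θ in Set.Ioi (0:ℝ), F (g.filter (fun e => θ ≤ x e)) := by
  set G : ℝ → ℝ := fun θ => F (g.filter (fun e => θ ≤ x e)) with hG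
  have hGm : Measurable G :=
    measurable_F_filter F g (fun e θ => θ ≤ x e) (fun e => measurableSet_Iic)
  have hGnn : ∀ θ, 0 ≤ G θ := fun θ => hnn _ (Finset.filter_subset _ _)
  have hGI : IntegrableOn G (Set.Ioi (0:ℝ)) volume := integrableOn_G F hF0 g x
  set f : ℝ → ℝ := fun r => F (g.filter (fun e => ENNReal.ofReal t ≤ ENNReal.ofReal r ∧
      ENNReal.ofReal r < ENNReal.ofReal t + ENNReal.ofReal (x e))) with hf
  have hfm : Measurable f := by
    refine measurable_F_filter F g (fun e r => ENNReal.ofReal t ≤ ENNReal.ofReal r ∧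
        ENNReal.ofReal r < ENNReal.ofReal t + ENNReal.ofReal (x e)) (fun e => ?_)
    have : {r : ℝ | ENNReal.ofReal t ≤ ENNReal.ofReal r ∧
        ENNReal.ofReal r < ENNReal.ofReal t + ENNReal.ofReal (x e)} =
        ENNReal.ofReal ⁻¹' (Set.Ici (ENNReal.ofReal t) ∩
          Set.Iio (ENNReal.ofReal t + ENNReal.ofReal (x e))) := by
      ext r; simp [Set.mem_preimage, Set.mem_Ici, Set.mem_Iio]
    rw [this]
    exact ENNReal.measurable_ofReal (measurableSet_Ici.inter measurableSet_Iio)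
  set φ : ℝ → ℝ := Set.indicator (Set.Ici t) (fun r => G (r - t)) with hφ
  have hφm : Measurable φ :=
    (hGm.comp (measurable_id.sub measurable_const)).indicator measurableSet_Ici
  set B : ℝ := ∑ A : Finset E, |F A| with hB
  have hφb : ∀ r, |φ r| ≤ B := by
    intro r
    by_cases hr : r ∈ Set.Ici t
    · rw [hφ, Set.indicator_of_mem hr]; exact abs_F_le F _
    · rw [hφ, Set.indicator_of_notMem hr]
      simpa using Finset.sum_nonneg fun A _ => abs_nonneg (F A)
  have hpt : ∀ r ∈ Set.Ioc a b, f r ≤ φ r := by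
    intro r hr
    have hr0 : 0 ≤ r := le_trans h0a hr.1.le
    by_cases hrt : t ≤ r
    · rw [hφ, Set.indicator_of_mem (Set.mem_Ici.mpr hrt)]
      refine hmono _ _ ?_ (Finset.filter_subset _ _)
      intro e hee
      rw [Finset.mem_filter] at hee ⊢
      refine ⟨hee.1, ?_⟩
      obtain ⟨-, h2⟩ := hee.2
      rw [← ENNReal.ofReal_add ht (hx e)] at h2
      have := (ENNReal.ofReal_lt_ofReal_iff_of_nonneg hr0).1 h2
      linarith
    · rw [hφ, Set.indicator_of_notMem (fun h => hrt (Set.mem_Ici.mp h))]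
      have : g.filter (fun e => ENNReal.ofReal t ≤ ENNReal.ofReal r ∧
          ENNReal.ofReal r < ENNReal.ofReal t + ENNReal.ofReal (x e)) = ∅ := by
        refine Finset.filter_eq_empty_iff.2 fun e _ hco => ?_
        have := (ENNReal.ofReal_le_ofReal_iff hr0).1 hco.1
        exact hrt this
      rw [hf]; simp only [this, hF0]; rfl
  have hfI : IntegrableOn f (Set.Ioc a b) volume :=
    integrableOn_of_bdd hfm (fun r => abs_F_le F _) (by simp [Real.volume_Ioc])
  have hφI : IntegrableOn φ (Set.Ioc a b) volume :=
    integrableOn_of_bdd hφm hφb (by simp [Real.volume_Ioc])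
  have hφI2 : IntegrableOn (fun r => G (r - t)) (Set.Icc t (max b t)) volume :=
    integrableOn_of_bdd (hGm.comp (measurable_id.sub measurable_const))
      (fun r => abs_F_le F _) (by simp [Real.volume_Icc])
  calc ∫ r in Set.Ioc a b, f r ≤ ∫ r in Set.Ioc a b, φ r :=
        setIntegral_mono_on hfI hφI measurableSet_Ioc hpt
    _ = ∫ r in Set.Ioc a b ∩ Set.Ici t, G (r - t) := setIntegral_indicator measurableSet_Ici
    _ ≤ ∫ r in Set.Icc t (max b t), G (r - t) := by
        refine setIntegral_mono_set hφI2 (ae_of_all _ fun r => hGnn _) ?_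
        refine (HasSubset.Subset.eventuallyLE ?_)
        rintro r ⟨hr1, hr2⟩
        exact ⟨hr2, le_max_of_le_left hr1.2⟩
    _ = ∫ r in Set.Ioc t (max b t), G (r - t) := integral_Icc_eq_integral_Ioc
    _ = ∫ r in t..(max b t), G (r - t) :=
        (intervalIntegral.integral_of_le (le_max_right b t)).symm
    _ = ∫ θ in (t - t)..(max b t - t), G θ := intervalIntegral.integral_comp_sub_right G t
    _ = ∫ θ in Set.Ioc (0:ℝ) (max b t - t), G θ := by
        rw [sub_self]
        exact intervalIntegral.integral_of_le (by simp [le_max_right b t])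
    _ ≤ ∫ θ in Set.Ioi (0:ℝ), G θ := by
        refine setIntegral_mono_set hGI (ae_of_all _ fun θ => hGnn _) ?_
        exact HasSubset.Subset.eventuallyLE Set.Ioc_subset_Ioi_self

lemma key_out (F : Finset E → ℝ) (g : Finset E) (x : E → ℝ) (t a b : ℝ)
    (h0a : 0 ≤ a) (ht : 0 ≤ t) (hx : ∀ e, 0 ≤ x e) (hF0 : F ∅ = 0)
    (hnn : ∀ A, A ⊆ g → 0 ≤ F A)
    (hmono : ∀ A B, A ⊆ B → B ⊆ g → F A ≤ F B) :
    ∫ r in Set.Ioc a b, F (g.filter (fun e => ENNReal.ofReal r < ENNReal.ofReal t ∧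
        ENNReal.ofReal t ≤ ENNReal.ofReal r + ENNReal.ofReal (x e))) ≤
      ∫ θ in Set.Ioi (0:ℝ), F (g.filter (fun e => θ ≤ x e)) := by
  set G : ℝ → ℝ := fun θ => F (g.filter (fun e => θ ≤ x e)) with hG
  have hGm : Measurable G :=
    measurable_F_filter F g (fun e θ => θ ≤ x e) (fun e => measurableSet_Iic)
  have hGnn : ∀ θ, 0 ≤ G θ := fun θ => hnn _ (Finset.filter_subset _ _)
  have hGI : IntegrableOn G (Set.Ioi (0:ℝ)) volume := integrableOn_G F hF0 g x
  set f : ℝ → ℝ := fun r => F (g.filter (fun e => ENNReal.ofReal r < ENNReal.ofReal t ∧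
      ENNReal.ofReal t ≤ ENNReal.ofReal r + ENNReal.ofReal (x e))) with hf
  have hfm : Measurable f := by
    refine measurable_F_filter F g (fun e r => ENNReal.ofReal r < ENNReal.ofReal t ∧
        ENNReal.ofReal t ≤ ENNReal.ofReal r + ENNReal.ofReal (x e)) (fun e => ?_)
    have : {r : ℝ | ENNReal.ofReal r < ENNReal.ofReal t ∧
        ENNReal.ofReal t ≤ ENNReal.ofReal r + ENNReal.ofReal (x e)} =
        ENNReal.ofReal ⁻¹' (Set.Iio (ENNReal.ofReal t) ∩
          {y : ℝ≥0∞ | ENNReal.ofReal t ≤ y + ENNReal.ofReal (x e)}) := by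
      ext r; simp [Set.mem_preimage, Set.mem_Iio]
    rw [this]
    refine ENNReal.measurable_ofReal (measurableSet_Iio.inter ?_)
    have : {y : ℝ≥0∞ | ENNReal.ofReal t ≤ y + ENNReal.ofReal (x e)} =
        (fun y : ℝ≥0∞ => y + ENNReal.ofReal (x e)) ⁻¹' Set.Ici (ENNReal.ofReal t) := rfl
    rw [this]
    exact (measurable_id.add_const _) measurableSet_Ici
  set φ : ℝ → ℝ := Set.indicator (Set.Iio t) (fun r => G (t - r)) with hφ
  have hφm : Measurable φ :=
    (hGm.comp (measurable_const.sub measurable_id)).indicator measurableSet_Iio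
  set B : ℝ := ∑ A : Finset E, |F A| with hB
  have hφb : ∀ r, |φ r| ≤ B := by
    intro r
    by_cases hr : r ∈ Set.Iio t
    · rw [hφ, Set.indicator_of_mem hr]; exact abs_F_le F _
    · rw [hφ, Set.indicator_of_notMem hr]
      simpa using Finset.sum_nonneg fun A _ => abs_nonneg (F A)
  have hpt : ∀ r ∈ Set.Ioc a b, f r ≤ φ r := by
    intro r hr
    have hr0 : 0 ≤ r := le_trans h0a hr.1.le
    by_cases hrt : r < t
    · rw [hφ, Set.indicator_of_mem (Set.mem_Iio.mpr hrt)]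
      refine hmono _ _ ?_ (Finset.filter_subset _ _)
      intro e hee
      rw [Finset.mem_filter] at hee ⊢
      refine ⟨hee.1, ?_⟩
      obtain ⟨-, h2⟩ := hee.2
      rw [← ENNReal.ofReal_add hr0 (hx e)] at h2
      have := (ENNReal.ofReal_le_ofReal_iff (add_nonneg hr0 (hx e))).1 h2
      linarith
    · rw [hφ, Set.indicator_of_notMem (fun h => hrt (Set.mem_Iio.mp h))]
      have : g.filter (fun e => ENNReal.ofReal r < ENNReal.ofReal t ∧
          ENNReal.ofReal t ≤ ENNReal.ofReal r + ENNReal.ofReal (x e)) = ∅ := by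
        refine Finset.filter_eq_empty_iff.2 fun e _ hco => ?_
        exact absurd hco.1 (not_lt.2 (ENNReal.ofReal_le_ofReal (not_lt.1 hrt)))
      rw [hf]; simp only [this, hF0]; rfl
  have hfI : IntegrableOn f (Set.Ioc a b) volume :=
    integrableOn_of_bdd hfm (fun r => abs_F_le F _) (by simp [Real.volume_Ioc])
  have hφI : IntegrableOn φ (Set.Ioc a b) volume :=
    integrableOn_of_bdd hφm hφb (by simp [Real.volume_Ioc])
  have hφI2 : IntegrableOn (fun r => G (t - r)) (Set.Icc (min a t) t) volume :=
    integrableOn_of_bdd (hGm.comp (measurable_const.sub measurable_id))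
      (fun r => abs_F_le F _) (by simp [Real.volume_Icc])
  calc ∫ r in Set.Ioc a b, f r ≤ ∫ r in Set.Ioc a b, φ r :=
        setIntegral_mono_on hfI hφI measurableSet_Ioc hpt
    _ = ∫ r in Set.Ioc a b ∩ Set.Iio t, G (t - r) := setIntegral_indicator measurableSet_Iio
    _ ≤ ∫ r in Set.Icc (min a t) t, G (t - r) := by
        refine setIntegral_mono_set hφI2 (ae_of_all _ fun r => hGnn _) ?_
        refine (HasSubset.Subset.eventuallyLE ?_)
        rintro r ⟨hr1, hr2⟩
        exact ⟨le_trans (min_le_left a t) hr1.1.le, le_of_lt hr2⟩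
    _ = ∫ r in Set.Ioc (min a t) t, G (t - r) := integral_Icc_eq_integral_Ioc
    _ = ∫ r in (min a t)..t, G (t - r) :=
        (intervalIntegral.integral_of_le (min_le_right a t)).symm
    _ = ∫ θ in (t - t)..(t - min a t), G θ := intervalIntegral.integral_comp_sub_left G t
    _ = ∫ θ in Set.Ioc (0:ℝ) (t - min a t), G θ := by
        rw [sub_self]
        exact intervalIntegral.integral_of_le (by simp [min_le_right a t])
    _ ≤ ∫ θ in Set.Ioi (0:ℝ), G θ := by
        refine setIntegral_mono_set hGI (ae_of_all _ fun θ => hGnn _) ?_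
        exact HasSubset.Subset.eventuallyLE Set.Ioc_subset_Ioi_self

end Key
section NetAux
open MeasureTheory
variable {V E : Type} [Fintype V] [Fintype E] [DecidableEq V] [DecidableEq E]

lemma rho_nonneg' (N : UPolyNet V E) (v : V) (A : Finset E) (hA : A ⊆ N.incE v) :
    0 ≤ N.rho v A := N.rho_nonneg v A hA

lemma nodeVol_eq (N : UPolyNet V E) (c1 c2 : E → ℝ) (v : V) :
    N.nodeVol c1 c2 v = ∫ θ in Set.Ioi (0:ℝ),
      N.rho v ((N.incE v).filter (fun e => θ ≤ N.dvec c1 c2 v e)) := rfl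

lemma nodeVol_nonneg (N : UPolyNet V E) (c1 c2 : E → ℝ) (v : V) :
    0 ≤ N.nodeVol c1 c2 v := by
  rw [nodeVol_eq]
  exact setIntegral_nonneg measurableSet_Ioi
    (fun θ _ => rho_nonneg' N v _ (Finset.filter_subset _ _))

lemma vol_nonneg (N : UPolyNet V E) (c1 c2 : E → ℝ) (X : Finset V) :
    0 ≤ N.vol c1 c2 X :=
  Finset.sum_nonneg fun v _ => nodeVol_nonneg N c1 c2 v

lemma vol_mono (N : UPolyNet V E) (c1 c2 : E → ℝ) {X Y : Finset V} (hXY : X ⊆ Y) :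
    N.vol c1 c2 X ≤ N.vol c1 c2 Y :=
  Finset.sum_le_sum_of_subset_of_nonneg hXY fun v _ _ => nodeVol_nonneg N c1 c2 v

lemma cutCost_le (N : UPolyNet V E) (F : Finset E) (g : E → V)
    (hg : ∀ e ∈ F, g e = N.ep1 e ∨ g e = N.ep2 e) :
    N.cutCost F ≤ ∑ v : V, N.rho v ((N.incE v ∩ F).filter (fun e => g e = v)) := by
  refine csInf_le ⟨0, ?_⟩ ⟨g, hg, rfl⟩
  rintro c ⟨g', hg', rfl⟩
  exact Finset.sum_nonneg fun v _ => rho_nonneg' N v _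
    (le_trans (Finset.filter_subset _ _) (Finset.inter_subset_left))

end NetAux
set_option maxHeartbeats 2000000 in
/-- **region growing.** Let `N` be an undirected polymatroidal network
with a fractional cut solution, let `k ≥ 2` be such that `log₂ k` is a positive
integer multiple of `3`, and let `0 < δ < 1` with `ℓ(e) < δ/(2·log₂ k)` for every
edge. Then for every node `s` there exists `r ∈ [0,δ)` such that
`ν(δ(B(s,r))) ≤ 28·(log₂ k)·(1/δ)·(vol(B(s,r)) + vol(V)/k)`. -/
theorem region_growing {V E : Type} [Fintype V] [Fintype E]
    [DecidableEq V] [DecidableEq E] (N : UPolyNet V E)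
    (ℓ c1 c2 : E → ℝ) (hc1 : ∀ e, 0 ≤ c1 e) (hc2 : ∀ e, 0 ≤ c2 e)
    (hsum : ∀ e, c1 e + c2 e = ℓ e)
    (k : ℕ) (hk : 2 ≤ k)
    (hk3 : ∃ m : ℕ, 0 < m ∧ Real.logb 2 k = 3 * (m : ℝ))
    (δ : ℝ) (hδ0 : 0 < δ) (hδ1 : δ < 1)
    (hℓ : ∀ e, ℓ e < δ / (2 * Real.logb 2 k))
    (s : V) :
    ∃ r : ℝ, 0 ≤ r ∧ r < δ ∧
      N.cutCost (uvcut N.ep1 N.ep2 (Finset.univ.filter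
          (fun u => udist N.ep1 N.ep2 ℓ s u ≤ ENNReal.ofReal r))) ≤
        28 * Real.logb 2 k * (1 / δ) *
          (N.vol c1 c2 (Finset.univ.filter
              (fun u => udist N.ep1 N.ep2 ℓ s u ≤ ENNReal.ofReal r)) +
            N.vol c1 c2 Finset.univ / k) := by
  classical
  obtain ⟨m, hm, hlogk⟩ := hk3
  set L : ℕ := 3 * m with hLdef
  have hL : Real.logb 2 (k : ℝ) = (L : ℝ) := by rw [hlogk, hLdef]; push_cast; ring
  have hL3 : 3 ≤ L := by omega
  have hLR : (3:ℝ) ≤ (L:ℝ) := by exact_mod_cast hL3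
  have hLpos : (0:ℝ) < (L:ℝ) := by linarith
  have hk0 : (0:ℝ) < (k:ℝ) := by positivity
  have hkpow : (k : ℝ) = 2 ^ L := by
    have h2 : (2:ℝ) ^ (Real.logb 2 (k:ℝ)) = (k:ℝ) :=
      Real.rpow_logb (by norm_num) (by norm_num) hk0
    rw [hL, Real.rpow_natCast] at h2
    exact h2.symm
  set ε : ℝ := δ / (2 * (L:ℝ)) with hεdef
  have hε : 0 < ε := by positivity
  have hℓε : ∀ e, ℓ e < ε := by intro e; have := hℓ e; rwa [hL] at this
  have hℓnn : ∀ e, 0 ≤ ℓ e := fun e => (hsum e) ▸ add_nonneg (hc1 e) (hc2 e)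
  have hdvnn : ∀ v e, 0 ≤ N.dvec c1 c2 v e := by
    intro v e; unfold UPolyNet.dvec; split <;> [exact hc1 e; exact hc2 e]
  have hdvle : ∀ v e, N.dvec c1 c2 v e ≤ ℓ e := by
    intro v e; rw [← hsum e]; unfold UPolyNet.dvec
    split
    · linarith [hc2 e]
    · linarith [hc1 e]
  set d : V → ℝ≥0∞ := udist N.ep1 N.ep2 ℓ s with hd
  set Bl : ℝ → Finset V := fun r => Finset.univ.filter (fun u => d u ≤ ENNReal.ofReal r)
    with hBl
  set volU : ℝ := N.vol c1 c2 Finset.univ with hvolU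
  set U : ℝ → ℝ := fun r => N.vol c1 c2 (Bl r) + volU / k with hU
  by_contra hcon
  push_neg at hcon
  -- hcon : ∀ r, 0 ≤ r → r < δ → RHS < cutCost
  set S : V → ℝ → Finset E := fun v r => (N.incE v).filter (fun e =>
      (d v ≤ ENNReal.ofReal r ∧
        ENNReal.ofReal r < d v + ENNReal.ofReal (N.dvec c1 c2 v e)) ∨
      (ENNReal.ofReal r < d v ∧
        d v ≤ ENNReal.ofReal r + ENNReal.ofReal (N.dvec c1 c2 v e))) with hS
  set h : ℝ → ℝ := fun r => ∑ v : V, N.rho v (S v r) with hh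
  -- Step 1 : cutCost ≤ h r
  have step1 : ∀ r : ℝ, 0 ≤ r → N.cutCost (uvcut N.ep1 N.ep2 (Bl r)) ≤ h r := by
    intro r hr0
    set F := uvcut N.ep1 N.ep2 (Bl r) with hF
    have hmemB : ∀ u : V, u ∈ Bl r ↔ d u ≤ ENNReal.ofReal r := by
      intro u; simp [hBl]
    set g : E → V := fun e =>
      if d (N.ep1 e) ≤ ENNReal.ofReal r ∧ ¬ d (N.ep2 e) ≤ ENNReal.ofReal r then
        (if ENNReal.ofReal r < d (N.ep1 e) + ENNReal.ofReal (c1 e) then N.ep1 e else N.ep2 e)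
      else if d (N.ep2 e) ≤ ENNReal.ofReal r ∧ ¬ d (N.ep1 e) ≤ ENNReal.ofReal r then
        (if ENNReal.ofReal r < d (N.ep2 e) + ENNReal.ofReal (c2 e) then N.ep2 e else N.ep1 e)
      else N.ep1 e with hg
    have hgvalid : ∀ e ∈ F, g e = N.ep1 e ∨ g e = N.ep2 e := by
      intro e _
      rw [hg]; dsimp only
      split_ifs <;> simp
    refine (cutCost_le N F g hgvalid).trans ?_
    rw [hh]
    refine Finset.sum_le_sum fun v _ => ?_
    refine N.rho_mono v _ (S v r) ?_ (Finset.filter_subset _ _)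
    intro e he
    rw [Finset.mem_filter, Finset.mem_inter] at he
    obtain ⟨⟨heinc, heF⟩, hev⟩ := he
    rw [hF, uvcut, Finset.mem_filter] at heF
    have hcr := heF.2
    rw [hmemB, hmemB] at hcr
    rw [hS, Finset.mem_filter]
    refine ⟨heinc, ?_⟩
    rcases hcr with ⟨h1, h2⟩ | ⟨h1, h2⟩
    · -- ep1 inside, ep2 outside
      have hne : N.ep1 e ≠ N.ep2 e := fun hh' => h2 (hh' ▸ h1)
      rw [hg] at hev; dsimp only at hev
      rw [if_pos ⟨h1, h2⟩] at hev
      by_cases hc : ENNReal.ofReal r < d (N.ep1 e) + ENNReal.ofReal (c1 e)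
      · rw [if_pos hc] at hev
        subst hev
        left
        have hdv : N.dvec c1 c2 (N.ep1 e) e = c1 e := by simp [UPolyNet.dvec]
        rw [hdv]
        exact ⟨h1, hc⟩
      · rw [if_neg hc] at hev
        subst hev
        right
        have hdv : N.dvec c1 c2 (N.ep2 e) e = c2 e := by simp [UPolyNet.dvec, hne]
        rw [hdv]
        refine ⟨not_le.1 h2, ?_⟩
        have htri := udist_triangle N.ep1 N.ep2 ℓ s (N.ep1 e) e (Or.inl rfl)
        rw [if_pos rfl] at htri
        calc d (N.ep2 e) ≤ d (N.ep1 e) + ENNReal.ofReal (ℓ e) := htri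
          _ = d (N.ep1 e) + (ENNReal.ofReal (c1 e) + ENNReal.ofReal (c2 e)) := by
              rw [← ENNReal.ofReal_add (hc1 e) (hc2 e), hsum e]
          _ = (d (N.ep1 e) + ENNReal.ofReal (c1 e)) + ENNReal.ofReal (c2 e) := by
              rw [add_assoc]
          _ ≤ ENNReal.ofReal r + ENNReal.ofReal (c2 e) :=
              add_le_add (not_lt.1 hc) le_rfl
    · -- ep2 inside, ep1 outside
      have hne : N.ep1 e ≠ N.ep2 e := fun hh' => h1 (hh' ▸ h2)
      rw [hg] at hev; dsimp only at hev
      rw [if_neg (fun hcontra => h1 hcontra.1), if_pos ⟨h2, h1⟩] at hev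
      by_cases hc : ENNReal.ofReal r < d (N.ep2 e) + ENNReal.ofReal (c2 e)
      · rw [if_pos hc] at hev
        subst hev
        left
        have hdv : N.dvec c1 c2 (N.ep2 e) e = c2 e := by simp [UPolyNet.dvec, hne]
        rw [hdv]
        exact ⟨h2, hc⟩
      · rw [if_neg hc] at hev
        subst hev
        right
        have hdv : N.dvec c1 c2 (N.ep1 e) e = c1 e := by simp [UPolyNet.dvec]
        rw [hdv]
        refine ⟨not_le.1 h1, ?_⟩
        have htri := udist_triangle N.ep1 N.ep2 ℓ s (N.ep2 e) e (Or.inr rfl)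
        rw [if_neg hne] at htri
        calc d (N.ep1 e) ≤ d (N.ep2 e) + ENNReal.ofReal (ℓ e) := htri
          _ = d (N.ep2 e) + (ENNReal.ofReal (c2 e) + ENNReal.ofReal (c1 e)) := by
              rw [← ENNReal.ofReal_add (hc2 e) (hc1 e), add_comm (c2 e), hsum e]
          _ = (d (N.ep2 e) + ENNReal.ofReal (c2 e)) + ENNReal.ofReal (c1 e) := by
              rw [add_assoc]
          _ ≤ ENNReal.ofReal r + ENNReal.ofReal (c1 e) :=
              add_le_add (not_lt.1 hc) le_rfl
  -- Step 2 : measurability / integrability of h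
  have hSm : ∀ v : V, Measurable (fun r : ℝ => N.rho v (S v r)) := by
    intro v
    simp only [hS]
    refine measurable_F_filter (N.rho v) (N.incE v)
      (fun e r => (d v ≤ ENNReal.ofReal r ∧
          ENNReal.ofReal r < d v + ENNReal.ofReal (N.dvec c1 c2 v e)) ∨
        (ENNReal.ofReal r < d v ∧
          d v ≤ ENNReal.ofReal r + ENNReal.ofReal (N.dvec c1 c2 v e))) (fun e => ?_)
    have hrw : {r : ℝ | (d v ≤ ENNReal.ofReal r ∧
          ENNReal.ofReal r < d v + ENNReal.ofReal (N.dvec c1 c2 v e)) ∨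
        (ENNReal.ofReal r < d v ∧
          d v ≤ ENNReal.ofReal r + ENNReal.ofReal (N.dvec c1 c2 v e))} =
        ENNReal.ofReal ⁻¹'
          ((Set.Ici (d v) ∩ Set.Iio (d v + ENNReal.ofReal (N.dvec c1 c2 v e))) ∪
           (Set.Iio (d v) ∩
             (fun y : ℝ≥0∞ => y + ENNReal.ofReal (N.dvec c1 c2 v e)) ⁻¹' Set.Ici (d v))) := by
      ext r
      simp [Set.mem_preimage, Set.mem_Ici, Set.mem_Iio]
    rw [hrw]
    exact ENNReal.measurable_ofReal
      ((measurableSet_Ici.inter measurableSet_Iio).union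
        (measurableSet_Iio.inter ((measurable_id.add_const _) measurableSet_Ici)))
  have hSb : ∀ v : V, ∀ r : ℝ, |N.rho v (S v r)| ≤ ∑ A : Finset E, |N.rho v A| := by
    intro v r; exact abs_F_le _ _
  have hSInt : ∀ v : V, ∀ a b : ℝ, IntegrableOn (fun r => N.rho v (S v r)) (Set.Ioc a b)
      volume := by
    intro v a b
    exact integrableOn_of_bdd (hSm v) (hSb v) (by simp [Real.volume_Ioc])
  have hhInt : ∀ a b : ℝ, IntegrableOn h (Set.Ioc a b) volume := by
    intro a b
    rw [hh]
    exact MeasureTheory.integrable_finset_sum _ (fun v _ => hSInt v a b)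
  -- Step 3 : upper bound for the integral of h on [jε, (j+1)ε]
  have step3 : ∀ j : ℕ,
      (∫ r in Set.Ioc ((j:ℝ)*ε) (((j:ℝ)+1)*ε), h r) ≤
        2 * N.vol c1 c2 (Bl (((j:ℝ)+2)*ε)) := by
    intro j
    set a : ℝ := (j:ℝ)*ε with ha
    set b : ℝ := ((j:ℝ)+1)*ε with hb
    have h0a : 0 ≤ a := by positivity
    have hsplit : (∫ r in Set.Ioc a b, h r) =
        ∑ v : V, ∫ r in Set.Ioc a b, N.rho v (S v r) := by
      rw [hh]; exact integral_finset_sum _ (fun v _ => hSInt v a b)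
    rw [hsplit]
    have hper : ∀ v : V, (∫ r in Set.Ioc a b, N.rho v (S v r)) ≤
        (if v ∈ Bl (((j:ℝ)+2)*ε) then 2 * N.nodeVol c1 c2 v else 0) := by
      intro v
      by_cases hv : v ∈ Bl (((j:ℝ)+2)*ε)
      · rw [if_pos hv]
        have hvle : d v ≤ ENNReal.ofReal (((j:ℝ)+2)*ε) := by
          simpa [hBl] using hv
        have hvne : d v ≠ ⊤ := ne_top_of_le_ne_top ENNReal.ofReal_ne_top hvle
        set t : ℝ := (d v).toReal with htdef
        have ht0 : 0 ≤ t := ENNReal.toReal_nonneg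
        have hdveq : d v = ENNReal.ofReal t := (ENNReal.ofReal_toReal hvne).symm
        have hSeq : ∀ r : ℝ, S v r =
            (N.incE v).filter (fun e => ENNReal.ofReal t ≤ ENNReal.ofReal r ∧
              ENNReal.ofReal r < ENNReal.ofReal t + ENNReal.ofReal (N.dvec c1 c2 v e)) ∪
            (N.incE v).filter (fun e => ENNReal.ofReal r < ENNReal.ofReal t ∧
              ENNReal.ofReal t ≤ ENNReal.ofReal r + ENNReal.ofReal (N.dvec c1 c2 v e)) := by
          intro r
          simp only [hS, hdveq]
          exact Finset.filter_or _ _ _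
        set Tin : ℝ → Finset E := fun r =>
            (N.incE v).filter (fun e => ENNReal.ofReal t ≤ ENNReal.ofReal r ∧
              ENNReal.ofReal r < ENNReal.ofReal t + ENNReal.ofReal (N.dvec c1 c2 v e))
          with hTin
        set Tout : ℝ → Finset E := fun r =>
            (N.incE v).filter (fun e => ENNReal.ofReal r < ENNReal.ofReal t ∧
              ENNReal.ofReal t ≤ ENNReal.ofReal r + ENNReal.ofReal (N.dvec c1 c2 v e))
          with hTout
        have hTinm : Measurable (fun r : ℝ => N.rho v (Tin r)) := by
          simp only [hTin]
          refine measurable_F_filter (N.rho v) (N.incE v)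
            (fun e r => ENNReal.ofReal t ≤ ENNReal.ofReal r ∧
              ENNReal.ofReal r < ENNReal.ofReal t + ENNReal.ofReal (N.dvec c1 c2 v e))
            (fun e => ?_)
          have hrw : {r : ℝ | ENNReal.ofReal t ≤ ENNReal.ofReal r ∧
              ENNReal.ofReal r < ENNReal.ofReal t + ENNReal.ofReal (N.dvec c1 c2 v e)} =
              ENNReal.ofReal ⁻¹' (Set.Ici (ENNReal.ofReal t) ∩
                Set.Iio (ENNReal.ofReal t + ENNReal.ofReal (N.dvec c1 c2 v e))) := by
            ext r; simp [Set.mem_preimage, Set.mem_Ici, Set.mem_Iio]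
          rw [hrw]
          exact ENNReal.measurable_ofReal (measurableSet_Ici.inter measurableSet_Iio)
        have hToutm : Measurable (fun r : ℝ => N.rho v (Tout r)) := by
          simp only [hTout]
          refine measurable_F_filter (N.rho v) (N.incE v)
            (fun e r => ENNReal.ofReal r < ENNReal.ofReal t ∧
              ENNReal.ofReal t ≤ ENNReal.ofReal r + ENNReal.ofReal (N.dvec c1 c2 v e))
            (fun e => ?_)
          have hrw : {r : ℝ | ENNReal.ofReal r < ENNReal.ofReal t ∧
              ENNReal.ofReal t ≤ ENNReal.ofReal r + ENNReal.ofReal (N.dvec c1 c2 v e)} =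
              ENNReal.ofReal ⁻¹' (Set.Iio (ENNReal.ofReal t) ∩
                (fun y : ℝ≥0∞ => y + ENNReal.ofReal (N.dvec c1 c2 v e)) ⁻¹'
                  Set.Ici (ENNReal.ofReal t)) := by
            ext r; simp [Set.mem_preimage, Set.mem_Ici, Set.mem_Iio]
          rw [hrw]
          exact ENNReal.measurable_ofReal
            (measurableSet_Iio.inter ((measurable_id.add_const _) measurableSet_Ici))
        have hTinI : IntegrableOn (fun r => N.rho v (Tin r)) (Set.Ioc a b) volume :=
          integrableOn_of_bdd hTinm (fun r => abs_F_le _ _) (by simp [Real.volume_Ioc])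
        have hToutI : IntegrableOn (fun r => N.rho v (Tout r)) (Set.Ioc a b) volume :=
          integrableOn_of_bdd hToutm (fun r => abs_F_le _ _) (by simp [Real.volume_Ioc])
        have hpt : ∀ r ∈ Set.Ioc a b, N.rho v (S v r) ≤
            N.rho v (Tin r) + N.rho v (Tout r) := by
          intro r _
          have hsub1 : Tin r ⊆ N.incE v := Finset.filter_subset _ _
          have hsub2 : Tout r ⊆ N.incE v := Finset.filter_subset _ _
          have hsubmod := N.rho_submod v (Tin r) (Tout r) hsub1 hsub2
          have hnn : 0 ≤ N.rho v (Tin r ∩ Tout r) :=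
            rho_nonneg' N v _ (le_trans Finset.inter_subset_left hsub1)
          have hun : S v r = Tin r ∪ Tout r := hSeq r
          rw [hun]
          linarith
        calc (∫ r in Set.Ioc a b, N.rho v (S v r))
            ≤ ∫ r in Set.Ioc a b, (N.rho v (Tin r) + N.rho v (Tout r)) :=
              setIntegral_mono_on (hSInt v a b) (hTinI.add hToutI) measurableSet_Ioc hpt
          _ = (∫ r in Set.Ioc a b, N.rho v (Tin r)) +
              (∫ r in Set.Ioc a b, N.rho v (Tout r)) := integral_add hTinI hToutI
          _ ≤ N.nodeVol c1 c2 v + N.nodeVol c1 c2 v := by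
              refine add_le_add ?_ ?_
              · rw [nodeVol_eq]
                exact key_in (N.rho v) (N.incE v) (N.dvec c1 c2 v) t a b h0a ht0
                  (hdvnn v) (N.rho_empty v) (fun A hA => rho_nonneg' N v A hA)
                  (fun A B hAB hB => N.rho_mono v A B hAB hB)
              · rw [nodeVol_eq]
                exact key_out (N.rho v) (N.incE v) (N.dvec c1 c2 v) t a b h0a ht0
                  (hdvnn v) (N.rho_empty v) (fun A hA => rho_nonneg' N v A hA)
                  (fun A B hAB hB => N.rho_mono v A B hAB hB)
          _ = 2 * N.nodeVol c1 c2 v := by ring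
      · rw [if_neg hv]
        have hv' : ENNReal.ofReal (((j:ℝ)+2)*ε) < d v := by
          rw [hBl] at hv
          simpa using hv
        have hzero : ∀ r ∈ Set.Ioc a b, N.rho v (S v r) = 0 := by
          intro r hr
          have hempty : S v r = ∅ := by
            rw [hS]
            refine Finset.filter_eq_empty_iff.2 fun e _ hco => ?_
            have hrb : r ≤ b := hr.2
            have hr0 : 0 ≤ r := le_trans h0a hr.1.le
            rcases hco with ⟨q1, _⟩ | ⟨_, q2⟩
            · have : d v ≤ ENNReal.ofReal (((j:ℝ)+2)*ε) :=
                le_trans q1 (ENNReal.ofReal_le_ofReal (by nlinarith [hε.le]))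
              exact absurd this (not_le.2 hv')
            · have hdvε : N.dvec c1 c2 v e ≤ ε := le_of_lt (lt_of_le_of_lt (hdvle v e) (hℓε e))
              have : d v ≤ ENNReal.ofReal (((j:ℝ)+2)*ε) := by
                refine le_trans q2 ?_
                rw [← ENNReal.ofReal_add hr0 (hdvnn v e)]
                exact ENNReal.ofReal_le_ofReal (by nlinarith [hε.le])
              exact absurd this (not_le.2 hv')
          rw [hempty, N.rho_empty]
        calc (∫ r in Set.Ioc a b, N.rho v (S v r))
            = ∫ r in Set.Ioc a b, (0:ℝ) :=
              setIntegral_congr_fun measurableSet_Ioc hzero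
          _ ≤ 0 := le_of_eq (by simp)
    calc (∑ v : V, ∫ r in Set.Ioc a b, N.rho v (S v r))
        ≤ ∑ v : V, (if v ∈ Bl (((j:ℝ)+2)*ε) then 2 * N.nodeVol c1 c2 v else 0) :=
          Finset.sum_le_sum fun v _ => hper v
      _ = ∑ v ∈ Bl (((j:ℝ)+2)*ε), 2 * N.nodeVol c1 c2 v := by
          rw [Finset.sum_ite_mem, Finset.univ_inter]
      _ = 2 * N.vol c1 c2 (Bl (((j:ℝ)+2)*ε)) := by
          rw [UPolyNet.vol, Finset.mul_sum]
  -- Step 4 : 7 * U(jε) < U((j+2)ε)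
  have hδε : 2*(L:ℝ)*ε = δ := by rw [hεdef]; field_simp
  have step4 : ∀ j : ℕ, (j:ℝ) + 2 ≤ 2*(L:ℝ) → 7 * U ((j:ℝ)*ε) < U (((j:ℝ)+2)*ε) := by
    intro j hj
    set a : ℝ := (j:ℝ)*ε with ha
    set b : ℝ := ((j:ℝ)+1)*ε with hb
    have h0a : 0 ≤ a := by positivity
    have hba : b - a = ε := by rw [ha, hb]; ring
    set C : ℝ := 28 * Real.logb 2 (k:ℝ) * (1/δ) with hCdef
    have hCpos : 0 < C := by rw [hCdef, hL]; positivity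
    have hpt : ∀ r ∈ Set.Ioc a b, C * U a < h r := by
      intro r hr
      have hr0 : 0 ≤ r := le_trans h0a hr.1.le
      have hrδ : r < δ := by
        have hb2 : b < 2*(L:ℝ)*ε := by
          rw [hb]
          have : (j:ℝ) + 1 < 2*(L:ℝ) := by linarith
          nlinarith
        linarith [hr.2]
      have hcon' := hcon r hr0 hrδ
      have hcc := step1 r hr0
      have hUa : U a ≤ N.vol c1 c2 (Bl r) + volU / k := by
        rw [hU]
        dsimp only
        have hsub : Bl a ⊆ Bl r := by
          intro u hu
          rw [hBl] at hu ⊢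
          rw [Finset.mem_filter] at hu ⊢
          exact ⟨hu.1, le_trans hu.2 (ENNReal.ofReal_le_ofReal hr.1.le)⟩
        linarith [vol_mono N c1 c2 hsub]
      calc C * U a ≤ C * (N.vol c1 c2 (Bl r) + volU / k) :=
            mul_le_mul_of_nonneg_left hUa hCpos.le
        _ < N.cutCost (uvcut N.ep1 N.ep2 (Bl r)) := hcon'
        _ ≤ h r := hcc
    have hconstI : IntegrableOn (fun _ : ℝ => C * U a) (Set.Ioc a b) volume :=
      integrableOn_const (by simp [Real.volume_Ioc])
    have hfsub : IntegrableOn (fun r => h r - C * U a) (Set.Ioc a b) volume :=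
      (hhInt a b).sub hconstI
    have hpos : 0 < ∫ r in Set.Ioc a b, (h r - C * U a) := by
      rw [setIntegral_pos_iff_support_of_nonneg_ae
        ((ae_restrict_iff' measurableSet_Ioc).2
          (ae_of_all _ (fun r hr => sub_nonneg.2 (hpt r hr).le))) hfsub]
      have hsub : Set.Ioc a b ⊆ Function.support (fun r => h r - C * U a) :=
        fun r hr => ne_of_gt (sub_pos.2 (hpt r hr))
      have heq : Function.support (fun r => h r - C * U a) ∩ Set.Ioc a b = Set.Ioc a b :=
        Set.inter_eq_self_of_subset_right hsub
      rw [heq, Real.volume_Ioc]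
      rw [hba]
      exact ENNReal.ofReal_pos.2 hε
    have hsplit2 : (∫ r in Set.Ioc a b, (h r - C * U a)) =
        (∫ r in Set.Ioc a b, h r) - C * U a * ε := by
      rw [integral_sub (hhInt a b) hconstI, setIntegral_const, measureReal_def, Real.volume_Ioc, hba,
        smul_eq_mul, ENNReal.toReal_ofReal hε.le]
      ring
    have h1 : C * U a * ε < ∫ r in Set.Ioc a b, h r := by
      rw [hsplit2] at hpos; linarith
    have h2 := step3 j
    have hCε : C * ε = 14 := by
      rw [hCdef, hL, hεdef]
      field_simp
      ring
    have h14 : 14 * U a < 2 * N.vol c1 c2 (Bl (((j:ℝ)+2)*ε)) := by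
      calc 14 * U a = C * U a * ε := by rw [← hCε]; ring
        _ < ∫ r in Set.Ioc a b, h r := h1
        _ ≤ 2 * N.vol c1 c2 (Bl (((j:ℝ)+2)*ε)) := h2
    have hvolle : N.vol c1 c2 (Bl (((j:ℝ)+2)*ε)) ≤ U (((j:ℝ)+2)*ε) := by
      rw [hU]
      dsimp only
      have : 0 ≤ volU / k := div_nonneg (vol_nonneg N c1 c2 _) (by positivity)
      linarith
    linarith
  -- Step 5 : chain and numeric contradiction
  set W : ℕ → ℝ := fun j => U ((j:ℝ)*ε) with hW
  have hstep : ∀ j : ℕ, j + 2 ≤ 2*L → 7 * W j < W (j+2) := by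
    intro j hj
    have hj' : (j:ℝ) + 2 ≤ 2*(L:ℝ) := by exact_mod_cast hj
    have h4 := step4 j hj'
    rw [hW]
    dsimp only
    have hc : ((j+2 : ℕ):ℝ) = (j:ℝ) + 2 := by push_cast; ring
    rw [hc]
    exact h4
  have hWnn : ∀ j : ℕ, 0 ≤ W j := by
    intro j
    rw [hW, hU]
    dsimp only
    have h1 : 0 ≤ N.vol c1 c2 (Bl ((j:ℝ)*ε)) := vol_nonneg N c1 c2 _
    have h2 : 0 ≤ volU / k := div_nonneg (vol_nonneg N c1 c2 _) (by positivity)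
    linarith
  have hchain : ∀ i : ℕ, 1 ≤ i → (2*i ≤ 2*L → 7^i * W 0 < W (2*i)) := by
    refine fun i hi => Nat.le_induction ?_ ?_ i hi
    · intro h2L
      have := hstep 0 (by omega)
      simpa using this
    · intro n hn ih h2L
      have h1 := ih (by omega)
      have h2 := hstep (2*n) (by omega)
      have hrw : (7:ℝ)^(n+1) * W 0 = 7 * (7^n * W 0) := by ring
      have hidx : 2*(n+1) = 2*n+2 := by omega
      rw [hrw, hidx]
      calc 7 * ((7:ℝ)^n * W 0) < 7 * W (2*n) := by linarith
        _ < W (2*n+2) := h2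
  have hfinal := hchain L (by omega) (le_refl _)
  have hW0k : volU / k ≤ W 0 := by
    rw [hW, hU]
    dsimp only
    exact le_add_of_nonneg_left (vol_nonneg N c1 c2 _)
  have hWL : W (2*L) ≤ 2*(k:ℝ)*W 0 := by
    have h1 : W (2*L) ≤ volU + volU / k := by
      rw [hW, hU]
      dsimp only
      have := vol_mono N c1 c2 (Finset.subset_univ (Bl (((2*L:ℕ):ℝ)*ε)))
      rw [← hvolU] at this
      linarith
    have h2 : volU ≤ (k:ℝ) * W 0 := by
      have hvv : volU = (k:ℝ) * (volU / k) := by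
        rw [mul_comm, div_mul_cancel₀ volU (ne_of_gt hk0)]
      rw [hvv]
      exact mul_le_mul_of_nonneg_left hW0k hk0.le
    have h3 : W 0 ≤ (k:ℝ) * W 0 :=
      le_mul_of_one_le_left (hWnn 0) (by exact_mod_cast hk.trans' (by norm_num))
    have h4 : volU / k ≤ W 0 := hW0k
    calc W (2*L) ≤ volU + volU / k := h1
      _ ≤ (k:ℝ) * W 0 + W 0 := add_le_add h2 h4
      _ ≤ (k:ℝ) * W 0 + (k:ℝ) * W 0 := by linarith
      _ = 2*(k:ℝ)*W 0 := by ring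
  have hnum : ∀ n : ℕ, 3 ≤ n → 2*(2:ℝ)^n ≤ 7^n := by
    intro n hn
    induction n with
    | zero => omega
    | succ p ih =>
      rcases Nat.lt_or_ge p 3 with hp | hp
      · interval_cases p
        · omega
        · omega
        · norm_num
      · have := ih hp
        rw [pow_succ, pow_succ]
        nlinarith [pow_nonneg (by norm_num : (0:ℝ) ≤ 2) p, pow_nonneg (by norm_num : (0:ℝ) ≤ 7) p]
  have hnumL := hnum L hL3
  have hlt : (7:ℝ)^L * W 0 < 2*(k:ℝ)*W 0 := lt_of_lt_of_le hfinal hWL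
  rw [hkpow] at hlt
  have hge : 2*(2:ℝ)^L * W 0 ≤ (7:ℝ)^L * W 0 := mul_le_mul_of_nonneg_right hnumL (hWnn 0)
  have : (2:ℝ)*2^L*W 0 < 2*2^L*W 0 := by
    calc (2:ℝ)*2^L*W 0 ≤ 7^L * W 0 := hge
      _ < 2*2^L*W 0 := by linarith
  exact absurd this (lt_irrefl _)
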